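/- Define generalized Hermite polynomials with values in the Clifford algebra R_{0,m} by H_0(x) = 1 and H_{n+1}(x) = x·H_n(x) - ∂_x H_n(x), where x is the vector variable and ∂_x = Σ_j e_j ∂_{x_j} the Dirac operator. Then for all n ≥ 0: H_{2n}(x) = Σ_{ν=0}^n C(n,ν) c_n(ν) x^{2(n-ν)} and H_{2n+1}(x) = Σ_{ν=0}^n C(n,ν) c_{n+1}(ν) x^{2(n-ν)+1}, where c_n(0) = 1 and c_n(ν) = Π_{l=1}^ν (m + 2(n-l)). -/

import Mathlib

open scoped BigOperators

/-- The Dirac operator `∂_x f = ∑_j e_j ∂_{x_j} f`. -/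
noncomputable def diracOp {m : ℕ} {A : Type*} [NormedRing A] [NormedAlgebra ℝ A]
    (e : Fin m → A) (f : (Fin m → ℝ) → A) (x : Fin m → ℝ) : A :=
  ∑ j : Fin m, e j * fderiv ℝ f x (Pi.single j 1)

/-- Generalized (Clifford-)Hermite polynomials:
`H 0 = 1`, `H (n+1) x = x · H n x - ∂_x (H n) x`, where `x = ∑ x j • e j`. -/
noncomputable def cliffordHermite {m : ℕ} {A : Type*} [NormedRing A] [NormedAlgebra ℝ A]
    (e : Fin m → A) : ℕ → (Fin m → ℝ) → A
  | 0 => fun _ => 1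
  | n + 1 => fun x =>
      (∑ j, x j • e j) * cliffordHermite e n x - diracOp e (cliffordHermite e n) x

/-- The constants `c n ν = ∏_{l=1}^ν (m + 2(n-l))`, with `c n 0 = 1`. -/
noncomputable def hermiteC (m : ℕ) (n ν : ℕ) : ℝ :=
  ∏ l ∈ Finset.Icc 1 ν, ((m : ℝ) + 2 * ((n : ℝ) - (l : ℝ)))

section Aux
variable {m : ℕ} {A : Type*} [NormedRing A] [NormedAlgebra ℝ A] (e : Fin m → A)

noncomputable def XL : (Fin m → ℝ) →L[ℝ] A :=
  ∑ j, (ContinuousLinearMap.proj j).smulRight (e j)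

lemma XL_apply (v : Fin m → ℝ) : XL e v = ∑ j, v j • e j := by simp [XL]

lemma XL_single (j : Fin m) : XL e (Pi.single j 1) = e j := by
  rw [XL_apply, Finset.sum_eq_single j]
  · simp
  · intro k _ hk; simp [Pi.single_apply, hk]
  · simp

lemma hasFDerivAt_X (x : Fin m → ℝ) :
    HasFDerivAt (fun y : Fin m → ℝ => ∑ j, y j • e j) (XL e) x :=
  (XL e).hasFDerivAt.congr_of_eventuallyEq (by filter_upwards with y; rw [XL_apply])

noncomputable def DX (p : ℕ) (x : Fin m → ℝ) : (Fin m → ℝ) →L[ℝ] A :=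
  ∑ i ∈ Finset.range p,
    (ContinuousLinearMap.mul ℝ A ((∑ j, x j • e j) ^ i)).comp
      (((ContinuousLinearMap.mul ℝ A).flip ((∑ j, x j • e j) ^ (p - 1 - i))).comp (XL e))

lemma DX_apply (p : ℕ) (x : Fin m → ℝ) (v : Fin m → ℝ) :
    DX e p x v = ∑ i ∈ Finset.range p,
      (∑ j, x j • e j) ^ i * (XL e v * (∑ j, x j • e j) ^ (p - 1 - i)) := by
  simp [DX]

lemma hasFDerivAt_Xpow (p : ℕ) (x : Fin m → ℝ) :
    HasFDerivAt (fun y : Fin m → ℝ => (∑ j, y j • e j) ^ p) (DX e p x) x := by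
  induction p with
  | zero =>
    simp only [pow_zero]
    have : DX e 0 x = 0 := by ext v; simp [DX]
    rw [this]; exact hasFDerivAt_const _ _
  | succ p ih =>
    have h := ih.mul' (hasFDerivAt_X e x)
    have heq : ((∑ j, x j • e j) ^ p) • (XL e) + (DX e p x).smulRight ((∑ j, x j • e j)) =
        DX e (p + 1) x := by
      ext v
      simp only [ContinuousLinearMap.add_apply, ContinuousLinearMap.smul_apply,
        ContinuousLinearMap.smulRight_apply, DX_apply, smul_eq_mul, Finset.sum_mul]
      rw [Finset.sum_range_succ]
      have h1 : p + 1 - 1 - p = 0 := by omega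
      rw [h1, pow_zero, mul_one, add_comm]
      congr 1
      refine Finset.sum_congr rfl fun i hi => ?_
      have hi' : i < p := Finset.mem_range.mp hi
      have h2 : p + 1 - 1 - i = (p - 1 - i) + 1 := by omega
      rw [h2, pow_succ, mul_assoc, mul_assoc]
    have h' : HasFDerivAt (fun y : Fin m → ℝ => (∑ j, y j • e j) ^ p * (∑ j, y j • e j))
        (DX e (p+1) x) x := heq ▸ h
    exact h'.congr_of_eventuallyEq (by filter_upwards with y; rw [pow_succ])

lemma diracOp_Xpow (p : ℕ) (x : Fin m → ℝ) :
    diracOp e (fun y => (∑ j, y j • e j) ^ p) x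
      = ∑ i ∈ Finset.range p, ∑ j,
          e j * ((∑ k, x k • e k) ^ i * (e j * (∑ k, x k • e k) ^ (p - 1 - i))) := by
  unfold diracOp
  have h : ∀ j : Fin m, e j * fderiv ℝ (fun y => (∑ k, y k • e k) ^ p) x (Pi.single j 1)
      = ∑ i ∈ Finset.range p,
          e j * ((∑ k, x k • e k) ^ i * (e j * (∑ k, x k • e k) ^ (p - 1 - i))) := by
    intro j
    rw [(hasFDerivAt_Xpow e p x).fderiv, DX_apply, XL_single, Finset.mul_sum]
  rw [Finset.sum_congr rfl fun j _ => h j, Finset.sum_comm]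

end Aux


section Alg
variable {m : ℕ} {A : Type*} [NormedRing A] [NormedAlgebra ℝ A] {e : Fin m → A}
    (he : ∀ j, e j ^ 2 = -1)
    (hanti : ∀ j k, j ≠ k → e j * e k = -(e k * e j))

include he in
lemma ee_self (j : Fin m) : e j * e j = -1 := by rw [← pow_two]; exact he j

include he hanti in
lemma X_sq (x : Fin m → ℝ) :
    (∑ j, x j • e j) * (∑ j, x j • e j) = (-(∑ j, x j ^ 2)) • (1 : A) := by
  set S := (∑ j, x j • e j) * (∑ j, x j • e j) with hS
  set T := (-(∑ j, x j ^ 2)) • (1 : A) with hT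
  have expand : S = ∑ j, ∑ k, (x j * x k) • (e j * e k) := by
    rw [hS, Finset.sum_mul_sum]
    exact Finset.sum_congr rfl fun j _ => Finset.sum_congr rfl fun k _ => by
      rw [smul_mul_assoc, mul_smul_comm, smul_smul]
  have h2 : (2 : ℝ) • S = (2 : ℝ) • T := by
    rw [two_smul, two_smul, expand]
    nth_rewrite 2 [Finset.sum_comm (f := fun j k => (x j * x k) • (e j * e k))]
    rw [← Finset.sum_add_distrib]
    have step : ∀ j : Fin m,
        ((∑ k, (x j * x k) • (e j * e k)) + ∑ k, (x k * x j) • (e k * e j))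
          = (-(2 * x j ^ 2)) • (1 : A) := by
      intro j
      rw [← Finset.sum_add_distrib]
      have : ∀ k : Fin m,
          (x j * x k) • (e j * e k) + (x k * x j) • (e k * e j)
            = if k = j then (-(2 * x j ^ 2)) • (1 : A) else 0 := by
        intro k
        by_cases hk : k = j
        · subst hk
          rw [ee_self he, if_pos rfl, smul_neg, ← neg_add, ← add_smul, ← neg_smul]
          congr 1
          ring
        · rw [hanti j k (fun h => hk h.symm)]
          rw [smul_neg, mul_comm (x k) (x j), neg_add_cancel]
          simp [hk]
      rw [Finset.sum_congr rfl fun k _ => this k, Finset.sum_ite_eq' Finset.univ j]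
      simp
    rw [Finset.sum_congr rfl fun j _ => step j, ← Finset.sum_smul, hT, ← add_smul]
    congr 1
    simp only [two_mul, neg_add, Finset.sum_add_distrib, Finset.sum_neg_distrib]
  calc S = (2⁻¹ : ℝ) • ((2:ℝ) • S) := by rw [smul_smul]; norm_num
    _ = (2⁻¹ : ℝ) • ((2:ℝ) • T) := by rw [h2]
    _ = T := by rw [smul_smul]; norm_num

include he hanti in
lemma X_pow_even (x : Fin m → ℝ) (a : ℕ) :
    (∑ j, x j • e j) ^ (2 * a) = ((-(∑ j, x j ^ 2)) ^ a) • (1 : A) := by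
  induction a with
  | zero => simp
  | succ a ih =>
    have : 2 * (a + 1) = 2 * a + 2 := by ring
    rw [this, pow_add, ih, pow_two, X_sq he hanti, pow_succ]
    rw [smul_mul_assoc, one_mul, smul_smul]

include he hanti in
lemma X_pow_odd (x : Fin m → ℝ) (a : ℕ) :
    (∑ j, x j • e j) ^ (2 * a + 1) = ((-(∑ j, x j ^ 2)) ^ a) • (∑ j, x j • e j) := by
  rw [pow_succ, X_pow_even he hanti, smul_mul_assoc, one_mul]

include he hanti in
lemma sum_eXe (x : Fin m → ℝ) :
    ∑ j, e j * ((∑ k, x k • e k) * e j) = ((m : ℝ) - 2) • (∑ k, x k • e k) := by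
  have hterm : ∀ j : Fin m, e j * ((∑ k, x k • e k) * e j)
      = (∑ k, x k • e k) - (2 * x j) • e j := by
    intro j
    have hk : ∀ k : Fin m, e j * ((x k • e k) * e j)
        = x k • e k - (if k = j then (2 * x j) • e j else 0) := by
      intro k
      by_cases hkj : k = j
      · subst hkj
        have h1 : e k * ((x k • e k) * e k) = x k • -(e k) := by
          rw [smul_mul_assoc, mul_smul_comm, ← mul_assoc, ee_self he, neg_one_mul]
        rw [h1, if_pos rfl, smul_neg, two_mul, add_smul]
        abel
      · rw [smul_mul_assoc, mul_smul_comm, if_neg hkj, sub_zero]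
        congr 1
        rw [hanti k j hkj, mul_neg, ← mul_assoc, ee_self he, neg_one_mul, neg_neg]
    calc e j * ((∑ k, x k • e k) * e j) = ∑ k, e j * ((x k • e k) * e j) := by
          rw [Finset.sum_mul, Finset.mul_sum]
      _ = ∑ k, (x k • e k - (if k = j then (2 * x j) • e j else 0)) :=
          Finset.sum_congr rfl fun k _ => hk k
      _ = (∑ k, x k • e k) - (2 * x j) • e j := by
          rw [Finset.sum_sub_distrib, Finset.sum_ite_eq' Finset.univ j]
          simp
  rw [Finset.sum_congr rfl fun j _ => hterm j, Finset.sum_sub_distrib]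
  rw [Finset.sum_const, Finset.card_univ, Fintype.card_fin]
  rw [sub_smul, ← Nat.cast_smul_eq_nsmul ℝ]
  congr 1
  rw [two_smul, ← Finset.sum_add_distrib]
  refine Finset.sum_congr rfl fun j _ => ?_
  rw [two_mul, add_smul]

include he in
lemma sum_eQe (Q : A) : ∑ j : Fin m, e j * (e j * Q) = (-(m : ℝ)) • Q := by
  have h : ∀ j : Fin m, e j * (e j * Q) = -Q := by
    intro j
    rw [← mul_assoc, ee_self he, neg_one_mul]
  rw [Finset.sum_congr rfl fun j _ => h j, Finset.sum_const, Finset.card_univ,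
    Fintype.card_fin, ← Nat.cast_smul_eq_nsmul ℝ, smul_neg, ← neg_smul]

end Alg


section Main
variable {m : ℕ} {A : Type*} [NormedRing A] [NormedAlgebra ℝ A] {e : Fin m → A}
    (he : ∀ j, e j ^ 2 = -1)
    (hanti : ∀ j k, j ≠ k → e j * e k = -(e k * e j))

include he hanti in
lemma cliff_even (x : Fin m → ℝ) (a q : ℕ) :
    ∑ j, e j * ((∑ k, x k • e k) ^ (2 * a) * (e j * (∑ k, x k • e k) ^ q))
      = (-(m:ℝ)) • (∑ k, x k • e k) ^ (2 * a + q) := by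
  have hterm : ∀ j : Fin m,
      e j * ((∑ k, x k • e k) ^ (2 * a) * (e j * (∑ k, x k • e k) ^ q))
        = (-(∑ k, x k ^ 2)) ^ a • (e j * (e j * (∑ k, x k • e k) ^ q)) := by
    intro j
    rw [X_pow_even he hanti, smul_mul_assoc, one_mul, mul_smul_comm]
  rw [Finset.sum_congr rfl fun j _ => hterm j, ← Finset.smul_sum, sum_eQe he, smul_comm]
  congr 1
  rw [pow_add, X_pow_even he hanti, smul_mul_assoc, one_mul]

include he hanti in
lemma cliff_odd (x : Fin m → ℝ) (a q : ℕ) :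
    ∑ j, e j * ((∑ k, x k • e k) ^ (2 * a + 1) * (e j * (∑ k, x k • e k) ^ q))
      = ((m:ℝ) - 2) • (∑ k, x k • e k) ^ (2 * a + 1 + q) := by
  have hterm : ∀ j : Fin m,
      e j * ((∑ k, x k • e k) ^ (2 * a + 1) * (e j * (∑ k, x k • e k) ^ q))
        = (-(∑ k, x k ^ 2)) ^ a •
            ((e j * ((∑ k, x k • e k) * e j)) * (∑ k, x k • e k) ^ q) := by
    intro j
    rw [X_pow_odd he hanti, smul_mul_assoc, mul_smul_comm]
    congr 1
    simp only [mul_assoc]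
  rw [Finset.sum_congr rfl fun j _ => hterm j, ← Finset.smul_sum, ← Finset.sum_mul,
    sum_eXe he hanti, smul_mul_assoc, smul_comm]
  congr 1
  rw [show 2 * a + 1 + q = 2 * a + (1 + q) by ring, pow_add, X_pow_even he hanti,
    smul_mul_assoc, one_mul, pow_add, pow_one]

include he hanti in
lemma cliffInnerSum (x : Fin m → ℝ) {p i : ℕ} (hip : i < p) :
    ∑ j, e j * ((∑ k, x k • e k) ^ i * (e j * (∑ k, x k • e k) ^ (p - 1 - i)))
      = (if Even i then -(m:ℝ) else (m:ℝ) - 2) • (∑ k, x k • e k) ^ (p - 1) := by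
  rcases Nat.even_or_odd i with hev | hod
  · obtain ⟨a, ha⟩ := hev
    have hia : i = 2 * a := by omega
    rw [if_pos ⟨a, ha⟩]
    calc ∑ j, e j * ((∑ k, x k • e k) ^ i * (e j * (∑ k, x k • e k) ^ (p - 1 - i)))
        = ∑ j, e j * ((∑ k, x k • e k) ^ (2 * a)
            * (e j * (∑ k, x k • e k) ^ (p - 1 - i))) := by rw [← hia]
      _ = (-(m:ℝ)) • (∑ k, x k • e k) ^ (2 * a + (p - 1 - i)) :=
          cliff_even he hanti x a _
      _ = (-(m:ℝ)) • (∑ k, x k • e k) ^ (p - 1) := by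
          rw [show 2 * a + (p - 1 - i) = p - 1 by omega]
  · obtain ⟨a, ha⟩ := hod
    rw [if_neg (by simp [ha, parity_simps])]
    calc ∑ j, e j * ((∑ k, x k • e k) ^ i * (e j * (∑ k, x k • e k) ^ (p - 1 - i)))
        = ∑ j, e j * ((∑ k, x k • e k) ^ (2 * a + 1)
            * (e j * (∑ k, x k • e k) ^ (p - 1 - i))) := by rw [← ha]
      _ = ((m:ℝ) - 2) • (∑ k, x k • e k) ^ (2 * a + 1 + (p - 1 - i)) :=
          cliff_odd he hanti x a _
      _ = ((m:ℝ) - 2) • (∑ k, x k • e k) ^ (p - 1) := by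
          rw [show 2 * a + 1 + (p - 1 - i) = p - 1 by omega]

lemma csum_even (k : ℕ) :
    ∑ i ∈ Finset.range (2 * k), (if Even i then -(m:ℝ) else (m:ℝ) - 2) = -2 * k := by
  induction k with
  | zero => simp
  | succ k ih =>
    rw [show 2 * (k+1) = (2*k + 1) + 1 by ring, Finset.sum_range_succ, Finset.sum_range_succ,
      ih, if_pos (even_two_mul k), if_neg (by simp [parity_simps])]
    push_cast; ring

lemma csum_odd (k : ℕ) :
    ∑ i ∈ Finset.range (2 * k + 1), (if Even i then -(m:ℝ) else (m:ℝ) - 2)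
      = -(m:ℝ) - 2 * k := by
  rw [Finset.sum_range_succ, csum_even, if_pos (even_two_mul k)]
  ring

include he hanti in
lemma dirac_even (k : ℕ) (x : Fin m → ℝ) :
    diracOp e (fun y => (∑ j, y j • e j) ^ (2 * k)) x
      = (-2 * (k:ℝ)) • (∑ j, x j • e j) ^ (2 * k - 1) := by
  rw [diracOp_Xpow]
  rw [Finset.sum_congr rfl fun i hi => cliffInnerSum he hanti x (Finset.mem_range.mp hi)]
  rw [← Finset.sum_smul, csum_even]

include he hanti in
lemma dirac_odd (k : ℕ) (x : Fin m → ℝ) :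
    diracOp e (fun y => (∑ j, y j • e j) ^ (2 * k + 1)) x
      = (-(m:ℝ) - 2 * k) • (∑ j, x j • e j) ^ (2 * k) := by
  rw [diracOp_Xpow]
  rw [Finset.sum_congr rfl fun i hi => cliffInnerSum he hanti x (Finset.mem_range.mp hi)]
  rw [← Finset.sum_smul, csum_odd]
  norm_num

lemma diracOp_sum_smul (s : Finset ℕ) (c : ℕ → ℝ) (p : ℕ → ℕ) (x : Fin m → ℝ) :
    diracOp e (fun y => ∑ ν ∈ s, c ν • (∑ j, y j • e j) ^ (p ν)) x
      = ∑ ν ∈ s, c ν • diracOp e (fun y => (∑ j, y j • e j) ^ (p ν)) x := by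
  unfold diracOp
  have hdiff : ∀ ν ∈ s, DifferentiableAt ℝ
      (fun y : Fin m → ℝ => c ν • (∑ j, y j • e j) ^ (p ν)) x := fun ν _ =>
    ((hasFDerivAt_Xpow e (p ν) x).differentiableAt).fun_const_smul _
  have hD : ∀ ν : ℕ, DifferentiableAt ℝ
      (fun y : Fin m → ℝ => (∑ j, y j • e j) ^ (p ν)) x := fun ν =>
    (hasFDerivAt_Xpow e (p ν) x).differentiableAt
  have hf : fderiv ℝ (fun y : Fin m → ℝ => ∑ ν ∈ s, c ν • (∑ j, y j • e j) ^ (p ν)) x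
      = ∑ ν ∈ s, c ν • fderiv ℝ (fun y : Fin m → ℝ => (∑ j, y j • e j) ^ (p ν)) x := by
    rw [fderiv_fun_sum hdiff]
    exact Finset.sum_congr rfl fun ν _ => fderiv_fun_const_smul (hD ν) (c ν)
  rw [Finset.sum_congr rfl fun j (_ : j ∈ Finset.univ) => by
    rw [hf, ContinuousLinearMap.sum_apply, Finset.mul_sum]]
  rw [Finset.sum_comm]
  refine Finset.sum_congr rfl fun ν _ => ?_
  rw [Finset.smul_sum]
  refine Finset.sum_congr rfl fun j _ => ?_
  rw [ContinuousLinearMap.smul_apply, mul_smul_comm]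

end Main
section CH

variable {m : ℕ} {A : Type*} [NormedRing A] [NormedAlgebra ℝ A]

lemma cliffordHermite_succ (e : Fin m → A) (n : ℕ) (x : Fin m → ℝ) :
    cliffordHermite e (n + 1) x
      = (∑ j, x j • e j) * cliffordHermite e n x - diracOp e (cliffordHermite e n) x := rfl

lemma cliffordHermite_zero (e : Fin m → A) (x : Fin m → ℝ) :
    cliffordHermite e 0 x = 1 := rfl

lemma diracOp_one (e : Fin m → A) (x : Fin m → ℝ) :
    diracOp e (fun _ => (1 : A)) x = 0 := by
  unfold diracOp
  simp [fderiv_const]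

lemma hermiteC_zero' (n : ℕ) : hermiteC m n 0 = 1 := by simp [hermiteC]

lemma hermiteC_succ' (n ν : ℕ) :
    hermiteC m n (ν + 1) = hermiteC m n ν * ((m : ℝ) + 2 * ((n : ℝ) - (ν + 1 : ℕ))) := by
  unfold hermiteC
  rw [Finset.prod_Icc_succ_top (by omega)]

lemma hermiteC_range (n ν : ℕ) :
    hermiteC m n ν = ∏ i ∈ Finset.range ν, ((m : ℝ) + 2 * ((n : ℝ) - ((i : ℝ) + 1))) := by
  induction ν with
  | zero => simp [hermiteC]
  | succ ν ih =>
    rw [hermiteC_succ', ih, Finset.prod_range_succ]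
    push_cast
    ring

lemma hermiteC_shift (n ν : ℕ) :
    hermiteC m (n + 1) (ν + 1) = ((m : ℝ) + 2 * n) * hermiteC m n ν := by
  induction ν with
  | zero => rw [hermiteC_succ', hermiteC_zero', hermiteC_zero']; push_cast; ring
  | succ ν ih =>
    rw [hermiteC_succ', ih, hermiteC_succ' n ν]
    push_cast
    ring

end CH
section Key

variable {m : ℕ} {A : Type*} [NormedRing A] [NormedAlgebra ℝ A] {e : Fin m → A}
    (he : ∀ j, e j ^ 2 = -1)
    (hanti : ∀ j k, j ≠ k → e j * e k = -(e k * e j))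

include he hanti in
lemma stepOdd (n : ℕ)
    (hEv : ∀ x : Fin m → ℝ, cliffordHermite e (2 * n) x
      = ∑ ν ∈ Finset.range (n + 1),
          ((n.choose ν : ℝ) * hermiteC m n ν) • (∑ j, x j • e j) ^ (2 * (n - ν))) :
    ∀ x : Fin m → ℝ, cliffordHermite e (2 * n + 1) x
      = ∑ ν ∈ Finset.range (n + 1),
          ((n.choose ν : ℝ) * hermiteC m (n + 1) ν) • (∑ j, x j • e j) ^ (2 * (n - ν) + 1) := by
  intro x
  rw [cliffordHermite_succ, hEv x, funext hEv]
  rw [diracOp_sum_smul (e := e) (Finset.range (n+1))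
    (fun ν => (n.choose ν : ℝ) * hermiteC m n ν) (fun ν => 2 * (n - ν)) x]
  have hD : ∑ ν ∈ Finset.range (n+1), ((n.choose ν : ℝ) * hermiteC m n ν) •
        diracOp e (fun y => (∑ j, y j • e j) ^ (2 * (n - ν))) x
      = ∑ ν ∈ Finset.range (n+1),
          ((n.choose ν : ℝ) * hermiteC m n ν * (-2 * ((n - ν : ℕ) : ℝ)))
            • (∑ j, x j • e j) ^ (2 * (n - ν) - 1) :=
    Finset.sum_congr rfl fun ν _ => by rw [dirac_even he hanti (n - ν) x, smul_smul]
  have hM : (∑ j, x j • e j) * ∑ ν ∈ Finset.range (n+1),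
        ((n.choose ν : ℝ) * hermiteC m n ν) • (∑ j, x j • e j) ^ (2 * (n - ν))
      = ∑ ν ∈ Finset.range (n+1),
          ((n.choose ν : ℝ) * hermiteC m n ν) • (∑ j, x j • e j) ^ (2 * (n - ν) + 1) := by
    rw [Finset.mul_sum]
    exact Finset.sum_congr rfl fun ν _ => by rw [mul_smul_comm, ← pow_succ']
  rw [hD, hM]
  have hS2 : ∑ ν ∈ Finset.range (n + 1),
        ((n.choose ν : ℝ) * hermiteC m n ν * (-2 * ((n - ν : ℕ) : ℝ)))
          • (∑ j, x j • e j) ^ (2 * (n - ν) - 1)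
      = ∑ ν ∈ Finset.range (n + 1),
          ((n.choose ν : ℝ) * hermiteC m n ν - (n.choose ν : ℝ) * hermiteC m (n + 1) ν)
            • (∑ j, x j • e j) ^ (2 * (n - ν) + 1) := by
    rw [Finset.sum_range_succ, Finset.sum_range_succ']
    have h0 : ((n.choose 0 : ℝ) * hermiteC m n 0 - (n.choose 0 : ℝ) * hermiteC m (n+1) 0) = 0 := by
      simp [hermiteC_zero']
    have hlast : ((n.choose n : ℝ) * hermiteC m n n * (-2 * ((n - n : ℕ) : ℝ))) = 0 := by
      simp
    rw [h0, hlast, zero_smul, zero_smul, add_zero, add_zero]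
    refine Finset.sum_congr rfl fun ν hν => ?_
    have hνn : ν < n := Finset.mem_range.mp hν
    have hexp : 2 * (n - ν) - 1 = 2 * (n - (ν + 1)) + 1 := by omega
    rw [hexp]
    congr 1
    have hcast : ((n - ν : ℕ) : ℝ) = (n : ℝ) - ν := Nat.cast_sub hνn.le
    have hch : ((n.choose (ν+1) : ℝ)) * ((ν : ℝ) + 1) = (n.choose ν : ℝ) * ((n : ℝ) - ν) := by
      have h2 : ((n.choose (ν+1) * (ν+1) : ℕ) : ℝ) = ((n.choose ν * (n - ν) : ℕ) : ℝ) := by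
        exact_mod_cast congrArg (fun t : ℕ => (t : ℝ)) (Nat.choose_succ_right_eq n ν)
      push_cast [Nat.cast_sub hνn.le] at h2
      linarith [h2]
    rw [hermiteC_succ' n ν, hermiteC_shift n ν, hcast]
    push_cast
    linear_combination (2 * hermiteC m n ν) * hch
  rw [hS2, ← Finset.sum_sub_distrib]
  refine Finset.sum_congr rfl fun ν _ => ?_
  rw [← sub_smul]
  congr 1
  ring

end Key
section Key2

variable {m : ℕ} {A : Type*} [NormedRing A] [NormedAlgebra ℝ A] {e : Fin m → A}
    (he : ∀ j, e j ^ 2 = -1)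
    (hanti : ∀ j k, j ≠ k → e j * e k = -(e k * e j))

include he hanti in
lemma stepEven (n : ℕ)
    (hOdd : ∀ x : Fin m → ℝ, cliffordHermite e (2 * n + 1) x
      = ∑ ν ∈ Finset.range (n + 1),
          ((n.choose ν : ℝ) * hermiteC m (n + 1) ν) • (∑ j, x j • e j) ^ (2 * (n - ν) + 1)) :
    ∀ x : Fin m → ℝ, cliffordHermite e (2 * (n + 1)) x
      = ∑ ν ∈ Finset.range (n + 2),
          (((n+1).choose ν : ℝ) * hermiteC m (n + 1) ν) • (∑ j, x j • e j) ^ (2 * ((n+1) - ν)) := by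
  intro x
  rw [show 2 * (n + 1) = (2 * n + 1) + 1 by ring]
  rw [cliffordHermite_succ, hOdd x, funext hOdd]
  rw [diracOp_sum_smul (e := e) (Finset.range (n+1))
    (fun ν => (n.choose ν : ℝ) * hermiteC m (n + 1) ν) (fun ν => 2 * (n - ν) + 1) x]
  have hD : ∑ ν ∈ Finset.range (n+1), ((n.choose ν : ℝ) * hermiteC m (n + 1) ν) •
        diracOp e (fun y => (∑ j, y j • e j) ^ (2 * (n - ν) + 1)) x
      = ∑ ν ∈ Finset.range (n+1),
          ((n.choose ν : ℝ) * hermiteC m (n + 1) ν * (-(m:ℝ) - 2 * ((n - ν : ℕ) : ℝ)))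
            • (∑ j, x j • e j) ^ (2 * (n - ν)) :=
    Finset.sum_congr rfl fun ν _ => by rw [dirac_odd he hanti (n - ν) x, smul_smul]
  have hM : (∑ j, x j • e j) * ∑ ν ∈ Finset.range (n+1),
        ((n.choose ν : ℝ) * hermiteC m (n + 1) ν) • (∑ j, x j • e j) ^ (2 * (n - ν) + 1)
      = ∑ ν ∈ Finset.range (n+1),
          ((n.choose ν : ℝ) * hermiteC m (n + 1) ν) • (∑ j, x j • e j) ^ (2 * (n - ν) + 1 + 1) := by
    rw [Finset.mul_sum]
    exact Finset.sum_congr rfl fun ν _ => by rw [mul_smul_comm, ← pow_succ']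
  rw [hD, hM]
  rw [Finset.sum_range_succ' (f := fun ν =>
    (((n+1).choose ν : ℝ) * hermiteC m (n + 1) ν) • (∑ j, x j • e j) ^ (2 * ((n+1) - ν)))]
  rw [Finset.sum_range_succ' (f := fun ν =>
    ((n.choose ν : ℝ) * hermiteC m (n + 1) ν) • (∑ j, x j • e j) ^ (2 * (n - ν) + 1 + 1))]
  have ha0 : ((n.choose 0 : ℝ) * hermiteC m (n + 1) 0) •
        (∑ j, x j • e j) ^ (2 * (n - 0) + 1 + 1)
      = (∑ j, x j • e j) ^ (2 * (n + 1)) := by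
    rw [show 2 * (n - 0) + 1 + 1 = 2 * (n + 1) by omega]
    simp [hermiteC_zero']
  have ht0 : (((n+1).choose 0 : ℝ) * hermiteC m (n + 1) 0) •
        (∑ j, x j • e j) ^ (2 * ((n+1) - 0))
      = (∑ j, x j • e j) ^ (2 * (n + 1)) := by
    simp [hermiteC_zero']
  rw [ha0, ht0]
  have hA : ∑ ν ∈ Finset.range n,
        ((n.choose (ν+1) : ℝ) * hermiteC m (n + 1) (ν+1)) •
          (∑ j, x j • e j) ^ (2 * (n - (ν+1)) + 1 + 1)
      = ∑ ν ∈ Finset.range (n+1),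
          ((n.choose (ν+1) : ℝ) * hermiteC m (n + 1) (ν+1)) •
            (∑ j, x j • e j) ^ (2 * (n - ν)) := by
    rw [Finset.sum_range_succ]
    rw [show ((n.choose (n+1) : ℝ)) = 0 by simp [Nat.choose_succ_self]]
    rw [zero_mul, zero_smul, add_zero]
    refine Finset.sum_congr rfl fun ν hν => ?_
    have hνn : ν < n := Finset.mem_range.mp hν
    congr 2
    omega
  have htail : ∑ ν ∈ Finset.range (n+1),
        (((n+1).choose (ν+1) : ℝ) * hermiteC m (n + 1) (ν+1)) •
          (∑ j, x j • e j) ^ (2 * ((n+1) - (ν+1)))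
      = ∑ ν ∈ Finset.range (n+1),
          (((n+1).choose (ν+1) : ℝ) * hermiteC m (n + 1) (ν+1)) •
            (∑ j, x j • e j) ^ (2 * (n - ν)) := by
    refine Finset.sum_congr rfl fun ν _ => ?_
    congr 2
    omega
  rw [hA, htail]
  rw [add_sub_right_comm]
  congr 1
  rw [← Finset.sum_sub_distrib]
  refine Finset.sum_congr rfl fun ν hν => ?_
  have hνn : ν ≤ n := by
    have := Finset.mem_range.mp hν; omega
  rw [← sub_smul]
  congr 1
  rw [hermiteC_succ' (n+1) ν, Nat.choose_succ_succ n ν]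
  push_cast [Nat.cast_sub hνn]
  ring

include he hanti in
lemma cliffKey (n : ℕ) : ∀ x : Fin m → ℝ,
    (cliffordHermite e (2 * n) x =
      ∑ ν ∈ Finset.range (n + 1),
        ((n.choose ν : ℝ) * hermiteC m n ν) • (∑ j, x j • e j) ^ (2 * (n - ν))) ∧
    (cliffordHermite e (2 * n + 1) x =
      ∑ ν ∈ Finset.range (n + 1),
        ((n.choose ν : ℝ) * hermiteC m (n + 1) ν) • (∑ j, x j • e j) ^ (2 * (n - ν) + 1)) := by
  induction n with
  | zero =>
    have h0 : ∀ x : Fin m → ℝ, cliffordHermite e (2 * 0) x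
        = ∑ ν ∈ Finset.range (0 + 1),
            ((Nat.choose 0 ν : ℝ) * hermiteC m 0 ν) • (∑ j, x j • e j) ^ (2 * (0 - ν)) := by
      intro x
      rw [show (2 * 0 : ℕ) = 0 by rfl, cliffordHermite_zero]
      simp [hermiteC_zero']
    exact fun x => ⟨h0 x, stepOdd he hanti 0 h0 x⟩
  | succ n ih =>
    have hEv := stepEven he hanti n (fun x => (ih x).2)
    exact fun x => ⟨hEv x, stepOdd he hanti (n+1) hEv x⟩

end Key2


/-- explicit form of the generalized Hermite polynomials:
`H_{2n}(x) = ∑_{ν=0}^n C(n,ν) c_n(ν) x^{2(n-ν)}` and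
`H_{2n+1}(x) = ∑_{ν=0}^n C(n,ν) c_{n+1}(ν) x^{2(n-ν)+1}`,
where `x = ∑ x j • e j` and powers are Clifford powers. -/
theorem cliffordHermite_explicit {m : ℕ} {A : Type*} [NormedRing A] [NormedAlgebra ℝ A]
    (e : Fin m → A)
    (he : ∀ j, e j ^ 2 = -1)
    (hanti : ∀ j k, j ≠ k → e j * e k = -(e k * e j))
    (n : ℕ) (x : Fin m → ℝ) :
    cliffordHermite e (2 * n) x =
      ∑ ν ∈ Finset.range (n + 1),
        ((n.choose ν : ℝ) * hermiteC m n ν) • (∑ j, x j • e j) ^ (2 * (n - ν)) ∧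
    cliffordHermite e (2 * n + 1) x =
      ∑ ν ∈ Finset.range (n + 1),
        ((n.choose ν : ℝ) * hermiteC m (n + 1) ν) • (∑ j, x j • e j) ^ (2 * (n - ν) + 1) := by
  exact cliffKey he hanti n x
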